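/- Let d ≥ 2 and let f be a homeomorphism of ℝ^d supported† on a compact set K ⊂ ℝ^d, and let x₀ be a non-wandering point of f. Then for every ε > 0 and every compact set P with K ⊂ int(P) there exists a homeomorphism g of ℝ^d, supported† on P, such that x₀ is a periodic point of g and sup_{x∈ℝ^d} ‖f(x) − g(x)‖ < ε. Moreover, if f is orientation-preserving then g can be chosen orientation-preserving. -/

import Mathlib

open Metric Set Function Filter Topology

noncomputable section

/-- `f` equals the identity outside `S` (supported† on `S`). -/
def SuppDaggerOn {E : Type*} (f : E → E) (S : Set E) : Prop := ∀ x, x ∉ S → f x = x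

/-- `V` vanishes outside `S`. -/
def ZeroOutside {E F : Type*} [Zero F] (V : E → F) (S : Set E) : Prop := ∀ x, x ∉ S → V x = 0

/-- `φ` is the time-1 solution map of the autonomous ODE `ẋ_t = V (x_t)`:
for every initial condition `x` there is a solution curve starting at `x`
whose time-1 value is `φ x`. -/
def IsTime1Flow {E : Type*} [NormedAddCommGroup E] [NormedSpace ℝ E]
    (V : E → E) (φ : E → E) : Prop :=
  ∀ x : E, ∃ γ : ℝ → E, γ 0 = x ∧ (∀ t : ℝ, HasDerivAt γ (V (γ t)) t) ∧ γ 1 = φ x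

/-- `compFlows ψ T = ψ (T-1) ∘ ⋯ ∘ ψ 0`. -/
def compFlows {E : Type*} (ψ : ℕ → E → E) : ℕ → E → E
  | 0 => id
  | T + 1 => ψ T ∘ compFlows ψ T

/-- Orientation preserving: homotopic to the identity. -/
def HomotopicToId {E : Type*} [TopologicalSpace E] (φ : E → E) : Prop :=
  ∃ f : C(E, E), ⇑f = φ ∧ f.Homotopic (ContinuousMap.id E)

/-- The closed unit cube `[0,1]^d`. -/
def cube01 (d : ℕ) : Set (Fin d → ℝ) := Set.univ.pi fun _ => Set.Icc (0:ℝ) 1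

/-- The open unit cube `(0,1)^d`. -/
def cube01open (d : ℕ) : Set (Fin d → ℝ) := Set.univ.pi fun _ => Set.Ioo (0:ℝ) 1

/-- The ReLU activation. -/
def relu (x : ℝ) : ℝ := max x 0

open scoped Classical in
/-- Number of nonzero entries of a matrix. -/
noncomputable def nnzM {m n : ℕ} (W : Matrix (Fin m) (Fin n) ℝ) : ℕ :=
  (Finset.univ.filter fun p : Fin m × Fin n => W p.1 p.2 ≠ 0).card

open scoped Classical in
/-- Number of nonzero entries of a vector. -/
noncomputable def nnzV {m : ℕ} (b : Fin m → ℝ) : ℕ :=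
  (Finset.univ.filter fun i : Fin m => b i ≠ 0).card

/-- `MLPRep σ depth width params n m f`: the map `f : ℝ^n → ℝ^m` is a σ-MLP with `depth`
affine layers, all hidden layers of dimension at most `width`, and `params` nonzero
parameters, i.e. `f = L_depth ∘ (σ ∘ L_{depth-1}) ∘ ⋯ ∘ (σ ∘ L_1)` for affine maps `L_l`. -/
inductive MLPRep (σ : ℝ → ℝ) :
    (depth width params n m : ℕ) → ((Fin n → ℝ) → (Fin m → ℝ)) → Prop
  | affine {n m : ℕ} (W : Matrix (Fin m) (Fin n) ℝ) (b : Fin m → ℝ) :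
      MLPRep σ 1 0 (nnzM W + nnzV b) n m (fun x => W.mulVec x + b)
  | layer {n k m depth width params : ℕ}
      (W : Matrix (Fin k) (Fin n) ℝ) (b : Fin k → ℝ)
      {f : (Fin k → ℝ) → (Fin m → ℝ)}
      (hf : MLPRep σ depth width params k m f) :
      MLPRep σ (depth + 1) (max k width) (params + (nnzM W + nnzV b)) n m
        (fun x => f (fun i => σ ((W.mulVec x + b) i)))

/-- `f` is a σ-MLP (of some depth, width and parameter count). -/
def IsMLP (σ : ℝ → ℝ) {n m : ℕ} (f : (Fin n → ℝ) → (Fin m → ℝ)) : Prop :=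
  ∃ depth width params, MLPRep σ depth width params n m f

abbrev Euc (d : ℕ) := EuclideanSpace ℝ (Fin d)

set_option linter.unusedSectionVars false
set_option linter.unusedVariables false

section ClosingAux

variable {E : Type*} [NormedAddCommGroup E] [NormedSpace ℝ E]

lemma homotopicToId_of_continuous {φ : E → E} (hφ : Continuous φ) : HomotopicToId φ := by
  refine ⟨⟨φ, hφ⟩, rfl, ⟨⟨⟨fun p => (1 - (p.1 : ℝ)) • φ p.2 + (p.1 : ℝ) • p.2, by fun_prop⟩,
    fun x => by simp, fun x => by simp⟩⟩⟩

variable [CompleteSpace E] [Nontrivial E]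

lemma exists_push (c : E) {r : ℝ} (hr : 0 < r) {v : E} (hv : ‖v‖ < r / 2) :
    ∃ ψ : E ≃ₜ E, (∀ x, x ∉ ball c r → ψ x = x) ∧ (∀ a ∈ closedBall c (r/2), ψ a = a + v)
      ∧ ∀ x, ‖ψ x - x‖ ≤ ‖v‖ := by
  set lam : E → ℝ := fun x => max (min (2 - 2 / r * dist x c) 1) 0 with hlam
  have lam_mem : ∀ x, lam x ∈ Icc (0:ℝ) 1 :=
    fun x => ⟨le_max_right _ _, max_le (min_le_right _ _) zero_le_one⟩
  have lam_lip : ∀ x y, |lam x - lam y| ≤ 2 / r * dist x y := by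
    intro x y
    have h1 : |lam x - lam y| ≤
        |min (2 - 2/r*dist x c) 1 - min (2 - 2/r*dist y c) 1| := by
      simpa using abs_max_sub_max_le_abs (min (2 - 2/r*dist x c) 1) (min (2 - 2/r*dist y c) 1) 0
    have h2 : |min (2 - 2/r*dist x c) 1 - min (2 - 2/r*dist y c) 1| ≤
        |(2 - 2/r*dist x c) - (2 - 2/r*dist y c)| := by
      refine (abs_min_sub_min_le_max _ 1 _ 1).trans ?_
      rw [sub_self, abs_zero]
      exact max_le le_rfl (abs_nonneg _)
    have h3 : (2 - 2/r*dist x c) - (2 - 2/r*dist y c) = 2/r * (dist y c - dist x c) := by ring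
    refine (h1.trans h2).trans ?_
    rw [h3, abs_mul, abs_of_nonneg (show (0:ℝ) ≤ 2/r by positivity), abs_sub_comm]
    exact mul_le_mul_of_nonneg_left (abs_dist_sub_le x y c) (by positivity)
  set ψ₀ : E → E := fun x => x + lam x • v with hψ₀
  have hA : ApproximatesLinearOn ψ₀ (ContinuousLinearEquiv.refl ℝ E).toContinuousLinearMap
      univ (Real.toNNReal (2/r) * ‖v‖₊) := by
    intro x _ y _
    have : ψ₀ x - ψ₀ y - (ContinuousLinearEquiv.refl ℝ E).toContinuousLinearMap (x - y) = (lam x - lam y) • v := by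
      simp [hψ₀, sub_smul]
      abel
    rw [this, norm_smul, Real.norm_eq_abs]
    have : ((Real.toNNReal (2/r) * ‖v‖₊ : NNReal) : ℝ) = (2/r) * ‖v‖ := by
      push_cast
      rw [Real.coe_toNNReal _ (by positivity)]
    rw [this]
    calc |lam x - lam y| * ‖v‖ ≤ (2/r * dist x y) * ‖v‖ :=
          mul_le_mul_of_nonneg_right (lam_lip x y) (norm_nonneg v)
      _ = 2/r * ‖v‖ * ‖x - y‖ := by rw [dist_eq_norm]; ring
  have hc : Subsingleton E ∨ (Real.toNNReal (2/r) * ‖v‖₊ : NNReal) <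
      ‖(((ContinuousLinearEquiv.refl ℝ E).symm : E ≃L[ℝ] E) : E →L[ℝ] E)‖₊⁻¹ := by
    right
    have : (((ContinuousLinearEquiv.refl ℝ E).symm : E ≃L[ℝ] E) : E →L[ℝ] E) =
        ContinuousLinearMap.id ℝ E := by
      ext x; rfl
    rw [this, ContinuousLinearMap.nnnorm_id, inv_one]
    have hreal : (2/r) * ‖v‖ < 1 := by
      have := (mul_lt_mul_of_pos_left hv (by positivity : (0:ℝ) < 2/r))
      calc (2/r) * ‖v‖ < (2/r) * (r/2) := this
        _ = 1 := by field_simp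
    rw [← NNReal.coe_lt_coe]
    push_cast
    rw [Real.coe_toNNReal _ (by positivity)]
    simpa using hreal
  refine ⟨hA.toHomeomorph ψ₀ hc, ?_, ?_, ?_⟩
  · intro x hx
    have hd : r ≤ dist x c := by simpa [mem_ball] using hx
    have h0 : 2 - 2/r * dist x c ≤ 0 := by
      have : 2/r * r ≤ 2/r * dist x c := mul_le_mul_of_nonneg_left hd (by positivity)
      have h2 : 2/r * r = 2 := by field_simp
      linarith
    have : lam x = 0 := by
      rw [hlam]
      simp only
      rw [min_eq_left (h0.trans zero_le_one), max_eq_right h0]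
    show ψ₀ x = x
    rw [hψ₀]; simp [this]
  · intro a ha
    have hd : dist a c ≤ r/2 := by simpa [mem_closedBall] using ha
    have h1 : 1 ≤ 2 - 2/r * dist a c := by
      have : 2/r * dist a c ≤ 2/r * (r/2) := mul_le_mul_of_nonneg_left hd (by positivity)
      have h2 : 2/r * (r/2) = 1 := by field_simp
      linarith
    have : lam a = 1 := by
      rw [hlam]
      simp only
      rw [min_eq_right h1, max_eq_left zero_le_one]
    show ψ₀ a = a + v
    rw [hψ₀]; simp [this]
  · intro x
    show ‖ψ₀ x - x‖ ≤ ‖v‖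
    rw [hψ₀]
    simp only [add_sub_cancel_left, norm_smul, Real.norm_eq_abs]
    calc |lam x| * ‖v‖ ≤ 1 * ‖v‖ := by
          refine mul_le_mul_of_nonneg_right ?_ (norm_nonneg v)
          rw [abs_of_nonneg (lam_mem x).1]; exact (lam_mem x).2
      _ = ‖v‖ := one_mul _

lemma supported_mapsTo {Φ : E ≃ₜ E} {s : Set E} (h : ∀ x, x ∉ s → Φ x = x) :
    ∀ x ∈ s, Φ x ∈ s := by
  intro x hx
  by_contra hmem
  have h1 : Φ (Φ x) = Φ x := h _ hmem
  have h2 : Φ x = x := Φ.injective h1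
  exact hmem (by rw [h2]; exact hx)

lemma supported_symm {Φ : E ≃ₜ E} {s : Set E} (h : ∀ x, x ∉ s → Φ x = x) :
    ∀ x, x ∉ s → Φ.symm x = x := by
  intro x hx
  have := congrArg Φ.symm (h x hx)
  simpa using this.symm

lemma exists_move_in_ball (c : E) {ρ : ℝ} (hρ : 0 < ρ) {a b : E}
    (ha : a ∈ ball c ρ) (hb : b ∈ ball c ρ) :
    ∃ Φ : E ≃ₜ E, (∀ x, x ∉ ball c ρ → Φ x = x) ∧ Φ a = b := by
  set S : Set E := {y | y ∈ ball c ρ ∧ ∃ Φ : E ≃ₜ E,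
    (∀ x, x ∉ ball c ρ → Φ x = x) ∧ Φ a = y} with hS
  have key : ∀ y ∈ ball c ρ, ∃ r > 0, ball y r ⊆ ball c ρ ∧
      ∀ y' ∈ ball y (r/4), ∃ ψ : E ≃ₜ E, (∀ x, x ∉ ball c ρ → ψ x = x) ∧ ψ y = y' := by
    intro y hy
    obtain ⟨r, hr, hsub⟩ := Metric.isOpen_iff.mp isOpen_ball y hy
    refine ⟨r, hr, hsub, ?_⟩
    intro y' hy'
    have hnorm : ‖y' - y‖ < r/2 := by
      rw [← dist_eq_norm]
      calc dist y' y < r/4 := by simpa [mem_ball] using hy'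
        _ < r/2 := by linarith
    obtain ⟨ψ, hout, hmove, _⟩ := exists_push y hr hnorm
    refine ⟨ψ, fun x hx => hout x (fun hmem => hx (hsub hmem)), ?_⟩
    have := hmove y (by simp [mem_closedBall, dist_self]; positivity)
    simpa using this
  have hSopen : IsOpen S := by
    rw [Metric.isOpen_iff]
    rintro y ⟨hy, Φ, hΦout, hΦa⟩
    obtain ⟨r, hr, hsub, hmove⟩ := key y hy
    refine ⟨r/4, by positivity, ?_⟩
    intro y' hy'
    obtain ⟨ψ, hψout, hψy⟩ := hmove y' hy'
    refine ⟨hsub (ball_subset_ball (by linarith) hy'), Φ.trans ψ, ?_, ?_⟩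
    · intro x hx
      simp [Homeomorph.trans_apply, hΦout x hx, hψout x hx]
    · simp [Homeomorph.trans_apply, hΦa, hψy]
  have hTopen : IsOpen (ball c ρ \ S) := by
    rw [Metric.isOpen_iff]
    rintro y ⟨hy, hyS⟩
    obtain ⟨r, hr, hsub, hmove⟩ := key y hy
    refine ⟨r/4, by positivity, ?_⟩
    intro y' hy'
    have hy'ball : y' ∈ ball c ρ := hsub (ball_subset_ball (by linarith) hy')
    refine ⟨hy'ball, fun hy'S => hyS ?_⟩
    obtain ⟨_, Φ, hΦout, hΦa⟩ := hy'S
    obtain ⟨ψ, hψout, hψy⟩ := hmove y' hy'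
    refine ⟨hy, Φ.trans ψ.symm, ?_, ?_⟩
    · intro x hx
      simp [Homeomorph.trans_apply, hΦout x hx, supported_symm hψout x hx]
    · simp [Homeomorph.trans_apply, hΦa, ← hψy]
  by_cases hbS : b ∈ S
  · exact ⟨hbS.2.choose, hbS.2.choose_spec⟩
  · exfalso
    have hconn := (convex_ball c ρ).isPreconnected
    have hcover : ball c ρ ⊆ S ∪ (ball c ρ \ S) := by
      intro x hx
      by_cases h : x ∈ S
      · exact Or.inl h
      · exact Or.inr ⟨hx, h⟩
    have h1 : (ball c ρ ∩ S).Nonempty :=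
      ⟨a, ha, ha, Homeomorph.refl E, fun x _ => rfl, rfl⟩
    have h2 : (ball c ρ ∩ (ball c ρ \ S)).Nonempty := ⟨b, hb, hb, hbS⟩
    obtain ⟨p, -, hpS, -, hpT⟩ := hconn S (ball c ρ \ S) hSopen hTopen hcover h1 h2
    exact hpT hpS

end ClosingAux

/-- **Statement 13.** `C⁰`-closing lemma for compactly supported homeomorphisms: if `f` is a
homeomorphism of `ℝ^d` (`d ≥ 2`) supported† on the compact set `K` and `x₀` is non-wandering,
then for every `ε > 0` and every compact `P` with `K ⊆ int P` there is a homeomorphism `g`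
supported† on `P` with `x₀` periodic for `g` and `sup_x ‖f x − g x‖ < ε`; if `f` is
orientation-preserving then `g` may be chosen orientation-preserving. -/
theorem c0_closing_lemma (d : ℕ) (hd : 2 ≤ d)
    (K : Set (Euc d)) (hK : IsCompact K)
    (f : Homeomorph (Euc d) (Euc d)) (hsupp : SuppDaggerOn ⇑f K)
    (x₀ : Euc d)
    (hnw : ∀ U : Set (Euc d), IsOpen U → x₀ ∈ U →
      ∃ n : ℕ, 1 ≤ n ∧ ((⇑f)^[n] '' U ∩ U).Nonempty) :
    ∀ ε : ℝ, 0 < ε → ∀ P : Set (Euc d), IsCompact P → K ⊆ interior P →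
      ∃ g : Homeomorph (Euc d) (Euc d),
        SuppDaggerOn ⇑g P ∧
        (∃ k : ℕ, 1 ≤ k ∧ (⇑g)^[k] x₀ = x₀) ∧
        (⨆ x : Euc d, ‖f x - g x‖) < ε ∧
        (HomotopicToId ⇑f → HomotopicToId ⇑g) := by
  classical
  intro ε hε P hP hKP
  haveI : Inhabited (Fin d) := ⟨⟨0, by omega⟩⟩
  haveI : Nontrivial (Euc d) := inferInstance
  by_cases hx₀ : x₀ ∈ K
  swap
  · -- x₀ is fixed by f
    refine ⟨f, fun x hx => hsupp x (fun h => hx (interior_subset (hKP h))), ⟨1, le_rfl, ?_⟩,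
      ?_, fun h => h⟩
    · simpa using hsupp x₀ hx₀
    · simpa [ciSup_const] using hε
  -- main case
  have hfu : UniformContinuous ⇑f := by
    have h1 : HasCompactSupport (fun x : Euc d => f x - x) :=
      HasCompactSupport.intro hK (fun x hx => by simp [hsupp x hx])
    have h2 : UniformContinuous (fun x : Euc d => f x - x) :=
      h1.uniformContinuous_of_continuous (f.continuous.sub continuous_id)
    have heq : ⇑f = fun x => (f x - x) + x := by funext x; simp
    rw [heq]
    exact h2.add uniformContinuous_id
  obtain ⟨δ₀, hδ₀, hδ₀f⟩ := Metric.uniformContinuous_iff.mp hfu (ε/3) (by positivity)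
  have hx₀P : x₀ ∈ interior P := hKP hx₀
  obtain ⟨ρ₁, hρ₁, hball₁⟩ := Metric.isOpen_iff.mp isOpen_interior x₀ hx₀P
  set ρ := min (ρ₁/2) (min (δ₀/3) (ε/9)) with hρdef
  have hρ : 0 < ρ := by positivity
  have hρle₁ : ρ ≤ ρ₁/2 := min_le_left _ _
  have hρleδ : ρ ≤ δ₀/3 := (min_le_right _ _).trans (min_le_left _ _)
  have hρleε : ρ ≤ ε/9 := (min_le_right _ _).trans (min_le_right _ _)
  set U := ball x₀ ρ with hU
  have hballP : U ⊆ P := fun y hy =>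
    interior_subset (hball₁ (by
      have : dist y x₀ < ρ := by simpa [hU, mem_ball] using hy
      simp only [mem_ball]
      linarith))
  -- minimal return time
  have hQ : ∃ n, 1 ≤ n ∧ ∃ z ∈ U, (⇑f)^[n] z ∈ U := by
    obtain ⟨n, hn1, y, hy⟩ := hnw U isOpen_ball (mem_ball_self hρ)
    obtain ⟨⟨z, hzU, hz⟩, hyU⟩ := hy
    exact ⟨n, hn1, z, hzU, hz ▸ hyU⟩
  set m := Nat.find hQ with hm
  obtain ⟨hm1, z, hzU, hzm⟩ := Nat.find_spec hQ
  have hmid : ∀ j, 1 ≤ j → j < m → (⇑f)^[j] z ∉ U :=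
    fun j hj1 hjm hmem => Nat.find_min hQ hjm ⟨hj1, z, hzU, hmem⟩
  -- two pushes
  obtain ⟨h₁, h₁out, h₁a⟩ := exists_move_in_ball x₀ hρ (mem_ball_self hρ) hzU
  obtain ⟨h₂, h₂out, h₂a⟩ := exists_move_in_ball x₀ hρ hzm (mem_ball_self hρ)
  set g : Homeomorph (Euc d) (Euc d) := (h₁.trans f).trans h₂ with hg
  have hgx : ∀ x, g x = h₂ (f (h₁ x)) := fun x => rfl
  have hgsupp : SuppDaggerOn ⇑g P := by
    intro x hx
    have hxU : x ∉ U := fun h => hx (hballP h)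
    rw [hgx, h₁out x hxU, hsupp x (fun hK' => hx (interior_subset (hKP hK'))), h₂out x hxU]
  have horbit : ∀ j, 1 ≤ j → j < m → (⇑g)^[j] x₀ = (⇑f)^[j] z := by
    intro j hj1 hjm
    induction j with
    | zero => omega
    | succ j ih =>
      by_cases hj0 : j = 0
      · subst hj0
        have e1 : (⇑g)^[0+1] x₀ = g x₀ := by simp
        have e2 : (⇑f)^[0+1] z = f z := by simp
        rw [e1, e2, hgx, h₁a,
          show f z = (⇑f)^[1] z from by simp]
        exact h₂out _ (hmid 1 le_rfl hjm)
      · have hj1' : 1 ≤ j := by omega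
        have hih := ih hj1' (by omega)
        rw [Function.iterate_succ_apply', hih, hgx, h₁out _ (hmid j hj1' (by omega)),
          show f ((⇑f)^[j] z) = (⇑f)^[j+1] z from (Function.iterate_succ_apply' _ _ _).symm]
        exact h₂out _ (hmid (j+1) (by omega) hjm)
  have hper : (⇑g)^[m] x₀ = x₀ := by
    by_cases hm1' : m = 1
    · rw [hm1']
      simp only [Function.iterate_one]
      rw [hgx, h₁a]
      have : f z = (⇑f)^[m] z := by rw [hm1']; simp
      rw [this, h₂a]
    · have hm2 : 2 ≤ m := by omega
      have hs : m = (m-1) + 1 := by omega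
      rw [hs, Function.iterate_succ_apply', horbit (m-1) (by omega) (by omega), hgx,
        h₁out _ (hmid (m-1) (by omega) (by omega)),
        show f ((⇑f)^[m-1] z) = (⇑f)^[(m-1)+1] z from (Function.iterate_succ_apply' _ _ _).symm,
        ← hs]
      exact h₂a
  -- distance bound
  have hmove_bound : ∀ (Φ : Euc d ≃ₜ Euc d), (∀ x, x ∉ U → Φ x = x) →
      ∀ x, dist (Φ x) x ≤ 2*ρ := by
    intro Φ hout x
    by_cases hx : x ∈ U
    · have h1 : Φ x ∈ U := supported_mapsTo hout x hx
      have d1 : dist (Φ x) x₀ < ρ := by simpa [hU, mem_ball] using h1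
      have d2 : dist x x₀ < ρ := by simpa [hU, mem_ball] using hx
      calc dist (Φ x) x ≤ dist (Φ x) x₀ + dist x₀ x := dist_triangle _ _ _
        _ = dist (Φ x) x₀ + dist x x₀ := by rw [dist_comm x₀ x]
        _ ≤ 2*ρ := by linarith
    · rw [hout x hx, dist_self]; positivity
  have hbound : ∀ x, ‖f x - g x‖ ≤ 2*ε/3 := by
    intro x
    have hd1 : dist x (h₁ x) ≤ 2*ρ := by
      rw [dist_comm]; exact hmove_bound h₁ h₁out x
    have hd1' : dist x (h₁ x) < δ₀ := lt_of_le_of_lt hd1 (by linarith)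
    have hf1 : dist (f x) (f (h₁ x)) < ε/3 := hδ₀f hd1'
    have hf2 : dist (f (h₁ x)) (h₂ (f (h₁ x))) ≤ 2*ρ := by
      rw [dist_comm]; exact hmove_bound h₂ h₂out _
    have : ‖f x - g x‖ = dist (f x) (g x) := (dist_eq_norm _ _).symm
    rw [this, hgx]
    calc dist (f x) (h₂ (f (h₁ x))) ≤ dist (f x) (f (h₁ x)) + dist (f (h₁ x)) (h₂ (f (h₁ x))) :=
          dist_triangle _ _ _
      _ ≤ ε/3 + 2*ρ := by linarith
      _ ≤ 2*ε/3 := by linarith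
  have hsup : (⨆ x : Euc d, ‖f x - g x‖) ≤ 2*ε/3 := Real.iSup_le hbound (by positivity)
  exact ⟨g, hgsupp, ⟨m, hm1, hper⟩, lt_of_le_of_lt hsup (by linarith),
    fun _ => homotopicToId_of_continuous g.continuous⟩
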